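/- Let c ∈ Q^n, c0 ∈ Q, A ∈ Q^{m×n}, b ∈ Q^m, and assume the polyhedron P = {x ∈ Q^n | A x ≤ b} is nonempty. The inequality cᵀx ≤ c0 holds for all x ∈ P (i.e., is redundant w.r.t. A x ≤ b) if and only if there exist a vector t ≥ 0 in Q^m and a scalar λ ≥ 0 such that cᵀ = tᵀA and c0 = tᵀb + λ. -/

import Mathlib

open Matrix

namespace FMred

abbrev Row (k : ℕ) := ((Fin k → ℚ) × ℚ)

/-- membership in the cone generated by rows of `S`. -/
inductive InCone {k : ℕ} (S : List (Row k)) : Row k → Prop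
  | mem {r : Row k} : r ∈ S → InCone S r
  | add {r s : Row k} : InCone S r → InCone S s → InCone S (r + s)
  | smul {a : ℚ} {r : Row k} : 0 ≤ a → InCone S r → InCone S (a • r)

def Sol {k : ℕ} (S : List (Row k)) (v : Fin k → ℚ) : Prop :=
  ∀ r ∈ S, r.1 ⬝ᵥ v ≤ r.2

lemma InCone.eval {k : ℕ} {S : List (Row k)} {r : Row k} (h : InCone S r)
    {v : Fin k → ℚ} (hv : Sol S v) : r.1 ⬝ᵥ v ≤ r.2 := by
  induction h with
  | mem hr => exact hv _ hr
  | add h1 h2 ih1 ih2 =>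
      simpa [add_dotProduct] using add_le_add ih1 ih2
  | smul ha h ih =>
      simpa [smul_dotProduct, smul_eq_mul] using mul_le_mul_of_nonneg_left ih ha

lemma snoc_dotProduct_snoc {k : ℕ} (u v : Fin k → ℚ) (x y : ℚ) :
    (Fin.snoc u x : Fin (k+1) → ℚ) ⬝ᵥ (Fin.snoc v y) = u ⬝ᵥ v + x * y := by
  simp [dotProduct, Fin.sum_univ_castSucc]

def padBack {k : ℕ} (r : Row k) : Row (k+1) := (Fin.snoc r.1 0, r.2)

lemma padBack_add {k : ℕ} (r s : Row k) : padBack (r + s) = padBack r + padBack s := by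
  unfold padBack
  refine Prod.ext ?_ rfl
  funext i
  refine Fin.lastCases ?_ (fun j => ?_) i <;>
    simp [Fin.snoc_last, Fin.snoc_castSucc]

lemma padBack_smul {k : ℕ} (a : ℚ) (r : Row k) : padBack (a • r) = a • padBack r := by
  unfold padBack
  refine Prod.ext ?_ rfl
  funext i
  refine Fin.lastCases ?_ (fun j => ?_) i <;>
    simp [Fin.snoc_last, Fin.snoc_castSucc]

lemma cone_trans {k : ℕ} {S : List (Row (k+1))} {T : List (Row k)}
    (hT : ∀ r ∈ T, InCone S (padBack r)) {r : Row k} (h : InCone T r) :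
    InCone S (padBack r) := by
  induction h with
  | mem hr => exact hT _ hr
  | add h1 h2 ih1 ih2 => rw [padBack_add]; exact InCone.add ih1 ih2
  | smul ha h ih => rw [padBack_smul]; exact InCone.smul ha ih

/-- the Fourier–Motzkin eliminated system (last variable removed). -/
def fmT {k : ℕ} (S : List (Row (k+1))) : List (Row k) :=
  ((S.filter (fun s => decide (s.1 (Fin.last k) = 0))).map (fun s => (Fin.init s.1, s.2)))
  ++ (((S.filter (fun s => decide (0 < s.1 (Fin.last k)))).product
        (S.filter (fun s => decide (s.1 (Fin.last k) < 0)))).map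
      (fun p => ((-(p.2.1 (Fin.last k))) • (Fin.init p.1.1)
                   + (p.1.1 (Fin.last k)) • (Fin.init p.2.1),
                 (-(p.2.1 (Fin.last k))) * p.1.2 + (p.1.1 (Fin.last k)) * p.2.2)))

lemma fm_cone {k : ℕ} (S : List (Row (k+1))) :
    ∀ r ∈ fmT S, InCone S (padBack r) := by
  intro r hr
  rcases List.mem_append.1 hr with h | h
  · obtain ⟨s, hs, rfl⟩ := List.mem_map.1 h
    have hs' := List.mem_filter.1 hs
    have ha : s.1 (Fin.last k) = 0 := by simpa using hs'.2
    have : padBack (Fin.init s.1, s.2) = s := by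
      unfold padBack
      refine Prod.ext ?_ rfl
      rw [← ha, Fin.snoc_init_self]
    rw [this]
    exact InCone.mem hs'.1
  · obtain ⟨p, hp, rfl⟩ := List.mem_map.1 h
    have hp' := List.mem_product.1 hp
    have h1 := List.mem_filter.1 hp'.1
    have h2 := List.mem_filter.1 hp'.2
    have ha1 : 0 < p.1.1 (Fin.last k) := by simpa using h1.2
    have ha2 : p.2.1 (Fin.last k) < 0 := by simpa using h2.2
    have key : padBack ((-(p.2.1 (Fin.last k))) • (Fin.init p.1.1)
                   + (p.1.1 (Fin.last k)) • (Fin.init p.2.1),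
                 (-(p.2.1 (Fin.last k))) * p.1.2 + (p.1.1 (Fin.last k)) * p.2.2)
        = (-(p.2.1 (Fin.last k))) • p.1 + (p.1.1 (Fin.last k)) • p.2 := by
      unfold padBack
      refine Prod.ext ?_ rfl
      funext i
      refine Fin.lastCases ?_ (fun j => ?_) i
      · simp [Fin.snoc_last]; ring
      · simp [Fin.snoc_castSucc, Fin.init]
    rw [key]
    exact InCone.add (InCone.smul (by linarith) (InCone.mem h1.1))
      (InCone.smul (by linarith) (InCone.mem h2.1))

lemma fm_sound {k : ℕ} {S : List (Row (k+1))} {x' : Fin k → ℚ} {ξ : ℚ}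
    (h : Sol S (Fin.snoc x' ξ)) : Sol (fmT S) x' := by
  intro r hr
  have := (fm_cone S r hr).eval h
  unfold padBack at this
  rwa [snoc_dotProduct_snoc, zero_mul, add_zero] at this

lemma fm_complete {k : ℕ} {S : List (Row (k+1))} {x' : Fin k → ℚ}
    (h : Sol (fmT S) x') : ∃ ξ, Sol S (Fin.snoc x' ξ) := by
  classical
  set a : Row (k+1) → ℚ := fun s => s.1 (Fin.last k) with ha
  set w : Row (k+1) → ℚ := fun s => (Fin.init s.1) ⬝ᵥ x' with hw
  set U := S.filter (fun s => decide (0 < a s)) with hU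
  set Lo := S.filter (fun s => decide (a s < 0)) with hLo
  set ub : Row (k+1) → ℚ := fun s => (s.2 - w s) / a s with hub
  -- row reduction helper
  have hrow : ∀ s ∈ S, ∀ ξ : ℚ, w s + a s * ξ ≤ s.2 → s.1 ⬝ᵥ (Fin.snoc x' ξ) ≤ s.2 := by
    intro s hs ξ hle
    calc s.1 ⬝ᵥ (Fin.snoc x' ξ)
        = (Fin.snoc (Fin.init s.1) (s.1 (Fin.last k)) : Fin (k+1) → ℚ) ⬝ᵥ (Fin.snoc x' ξ) := by
          rw [Fin.snoc_init_self]
      _ = w s + a s * ξ := by rw [snoc_dotProduct_snoc]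
      _ ≤ s.2 := hle
  -- zero rows
  have F0 : ∀ s ∈ S, a s = 0 → w s ≤ s.2 := by
    intro s hs h0
    have hmem : ((Fin.init s.1, s.2) : Row k) ∈ fmT S := by
      apply List.mem_append.2; left
      exact List.mem_map.2 ⟨s, List.mem_filter.2 ⟨hs, by simpa using h0⟩, rfl⟩
    simpa [hw] using h _ hmem
  -- pair rows
  have FP : ∀ su ∈ U, ∀ sl ∈ Lo,
      (-(a sl)) * (w su) + (a su) * (w sl) ≤ (-(a sl)) * su.2 + (a su) * sl.2 := by
    intro su hsu sl hsl
    have hmem : (((-(a sl)) • (Fin.init su.1) + (a su) • (Fin.init sl.1),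
        (-(a sl)) * su.2 + (a su) * sl.2) : Row k) ∈ fmT S := by
      apply List.mem_append.2; right
      exact List.mem_map.2 ⟨(su, sl), List.mem_product.2 ⟨hsu, hsl⟩, rfl⟩
    have := h _ hmem
    simpa [add_dotProduct, smul_dotProduct, smul_eq_mul, hw] using this
  have haU : ∀ s ∈ U, 0 < a s := fun s hs => by
    simpa using (List.mem_filter.1 hs).2
  have haLo : ∀ s ∈ Lo, a s < 0 := fun s hs => by
    simpa using (List.mem_filter.1 hs).2
  have hUsub : ∀ s ∈ S, 0 < a s → s ∈ U := fun s hs h0 =>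
    List.mem_filter.2 ⟨hs, by simpa using h0⟩
  have hLosub : ∀ s ∈ S, a s < 0 → s ∈ Lo := fun s hs h0 =>
    List.mem_filter.2 ⟨hs, by simpa using h0⟩
  -- key comparison
  have key : ∀ su ∈ U, ∀ sl ∈ Lo, ub sl ≤ ub su := by
    intro su hsu sl hsl
    have hau : 0 < a su := haU _ hsu
    have hal : a sl < 0 := haLo _ hsl
    have hfp := FP su hsu sl hsl
    show (sl.2 - w sl) / a sl ≤ (su.2 - w su) / a su
    rw [div_le_iff_of_neg hal]
    rw [div_mul_eq_mul_div, div_le_iff₀ hau]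
    nlinarith [hfp]
  -- upper bound rows hold at ub values
  have hMul : ∀ s, a s ≠ 0 → a s * ub s = s.2 - w s := by
    intro s hs
    show a s * ((s.2 - w s) / a s) = s.2 - w s
    field_simp
  cases hargU : U.argmin ub with
  | some su =>
    have hsuU : su ∈ U := List.argmin_mem hargU
    have hau : 0 < a su := haU _ hsuU
    refine ⟨ub su, fun s hs => hrow s hs _ ?_⟩
    rcases lt_trichotomy (a s) 0 with h0 | h0 | h0
    · have hsLo := hLosub s hs h0
      have h1 : ub s ≤ ub su := key su hsuU s hsLo
      have h2 : a s * ub su ≤ a s * ub s := mul_le_mul_of_nonpos_left h1 (le_of_lt h0)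
      have h3 := hMul s (ne_of_lt h0)
      linarith
    · rw [h0, zero_mul, add_zero]; exact F0 s hs h0
    · have hsU := hUsub s hs h0
      have h1 : ub su ≤ ub s := List.le_of_mem_argmin hsU hargU
      have h2 : a s * ub su ≤ a s * ub s := mul_le_mul_of_nonneg_left h1 (le_of_lt h0)
      have h3 := hMul s (ne_of_gt h0)
      linarith
  | none =>
    have hUnil : U = [] := List.argmin_eq_none.1 hargU
    cases hargL : Lo.argmax ub with
    | some sl =>
      have hslLo : sl ∈ Lo := List.argmax_mem hargL
      refine ⟨ub sl, fun s hs => hrow s hs _ ?_⟩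
      rcases lt_trichotomy (a s) 0 with h0 | h0 | h0
      · have hsLo := hLosub s hs h0
        have h1 : ub s ≤ ub sl := List.le_of_mem_argmax hsLo hargL
        have h2 : a s * ub sl ≤ a s * ub s := mul_le_mul_of_nonpos_left h1 (le_of_lt h0)
        have h3 := hMul s (ne_of_lt h0)
        linarith
      · rw [h0, zero_mul, add_zero]; exact F0 s hs h0
      · exact absurd (hUsub s hs h0) (by simp [hUnil])
    | none =>
      have hLnil : Lo = [] := List.argmax_eq_none.1 hargL
      refine ⟨0, fun s hs => hrow s hs _ ?_⟩
      rcases lt_trichotomy (a s) 0 with h0 | h0 | h0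
      · exact absurd (hLosub s hs h0) (by simp [hLnil])
      · rw [h0, zero_mul, add_zero]; exact F0 s hs h0
      · exact absurd (hUsub s hs h0) (by simp [hUnil])
def padTo (k : ℕ) (r : Row 1) : Row (k+1) :=
  (fun i => if (i : ℕ) = 0 then r.1 0 else 0, r.2)

lemma padBack_padTo (k : ℕ) (r : Row 1) : padBack (padTo k r) = padTo (k+1) r := by
  unfold padBack padTo
  refine Prod.ext ?_ rfl
  funext i
  refine Fin.lastCases ?_ (fun j => ?_) i
  · simp [Fin.snoc_last, Fin.val_last]
  · simp [Fin.snoc_castSucc]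

lemma elimAll (k : ℕ) (S : List (Row (k+1))) :
    ∃ T : List (Row 1),
      (∀ r ∈ T, InCone S (padTo k r)) ∧
      (∀ z : ℚ, Sol T (fun _ => z) ↔ ∃ v : Fin (k+1) → ℚ, v 0 = z ∧ Sol S v) := by
  induction k with
  | zero =>
    refine ⟨S, fun r hr => ?_, fun z => ?_⟩
    · have : padTo 0 r = r := by
        refine Prod.ext ?_ rfl
        funext i
        fin_cases i
        simp [padTo]
      rw [this]; exact InCone.mem hr
    · constructor
      · intro hz; exact ⟨fun _ => z, rfl, hz⟩
      · rintro ⟨v, hv0, hv⟩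
        have : v = fun _ => z := by
          funext i; fin_cases i; exact hv0
        rwa [this] at hv
  | succ k ih =>
    obtain ⟨T, hc, he⟩ := ih (fmT S)
    refine ⟨T, ?_, ?_⟩
    · intro r hr
      have h2 : InCone S (padBack (padTo k r)) := cone_trans (fm_cone S) (hc r hr)
      rwa [padBack_padTo] at h2
    · intro z
      rw [he z]
      constructor
      · rintro ⟨v, hv0, hv⟩
        obtain ⟨ξ, hs⟩ := fm_complete hv
        refine ⟨Fin.snoc v ξ, ?_, hs⟩
        rw [show (0 : Fin (k+1+1)) = Fin.castSucc 0 by rfl, Fin.snoc_castSucc]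
        exact hv0
      · rintro ⟨v, hv0, hv⟩
        refine ⟨Fin.init v, ?_, ?_⟩
        · rw [show (Fin.init v) 0 = v (Fin.castSucc 0) by rfl]
          rwa [show Fin.castSucc (0 : Fin (k+1)) = 0 by rfl]
        · have : Sol S (Fin.snoc (Fin.init v) (v (Fin.last _))) := by
            rwa [Fin.snoc_init_self]
          exact fm_sound this

lemma InCone.exists_weights_ofFn {k N : ℕ} {g : Fin N → Row k} {r : Row k}
    (h : InCone (List.ofFn g) r) :
    ∃ t : Fin N → ℚ, (∀ i, 0 ≤ t i) ∧
      (∑ i, t i • (g i).1 = r.1) ∧ (∑ i, t i * (g i).2 = r.2) := by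
  induction h with
  | mem hr =>
    obtain ⟨i, hi⟩ := (List.mem_ofFn).1 hr
    refine ⟨Pi.single i 1, fun j => ?_, ?_, ?_⟩
    · rcases eq_or_ne j i with rfl | hne
      · simp
      · simp [Pi.single_apply, hne]
    · rw [← hi]; simp [Pi.single_apply, ite_smul]
    · rw [← hi]; simp [Pi.single_apply, ite_mul]
  | add h1 h2 ih1 ih2 =>
    obtain ⟨t1, ht1, hl1, hr1⟩ := ih1
    obtain ⟨t2, ht2, hl2, hr2⟩ := ih2
    refine ⟨t1 + t2, fun i => add_nonneg (ht1 i) (ht2 i), ?_, ?_⟩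
    · simp only [Pi.add_apply, add_smul, Finset.sum_add_distrib, hl1, hl2]; rfl
    · simp only [Pi.add_apply, add_mul, Finset.sum_add_distrib, hr1, hr2]; rfl
  | smul ha _ ih =>
    rename_i aa rr _
    obtain ⟨t, ht, hl, hr⟩ := ih
    refine ⟨aa • t, fun i => mul_nonneg ha (ht i), ?_, ?_⟩
    · have hf : (aa • rr).1 = aa • rr.1 := rfl
      rw [hf, ← hl, Finset.smul_sum]
      exact Finset.sum_congr rfl fun i _ => by simp [smul_smul]
    · have hf : (aa • rr).2 = aa * rr.2 := rfl
      rw [hf, ← hr, Finset.mul_sum]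
      exact Finset.sum_congr rfl fun i _ => by simp [smul_eq_mul, mul_assoc]
lemma cons_dotProduct_eq {k : ℕ} (x : ℚ) (u : Fin k → ℚ) (v : Fin (k+1) → ℚ) :
    (Fin.cons x u : Fin (k+1) → ℚ) ⬝ᵥ v = x * v 0 + u ⬝ᵥ (Fin.tail v) := by
  simp [dotProduct, Fin.sum_univ_succ, Fin.tail]

lemma dot1 (p : Fin 1 → ℚ) (z : ℚ) : p ⬝ᵥ (fun _ => z) = p 0 * z := by
  simp [dotProduct]

end FMred

open FMred

/-- Redundancy test criterion: assuming `P = {x | A x ≤ b}` is nonempty,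
the inequality `cᵀx ≤ c0` holds on all of `P` iff there exist `t ≥ 0` and
`λ ≥ 0` with `cᵀ = tᵀA` and `c0 = tᵀb + λ`. -/
theorem redundancy_test_criterion (m n : ℕ) (A : Matrix (Fin m) (Fin n) ℚ)
    (b : Fin m → ℚ) (c : Fin n → ℚ) (c0 : ℚ)
    (hne : ∃ x : Fin n → ℚ, A.mulVec x ≤ b) :
    (∀ x : Fin n → ℚ, A.mulVec x ≤ b → c ⬝ᵥ x ≤ c0) ↔
      ∃ (t : Fin m → ℚ) (lam : ℚ), 0 ≤ t ∧ 0 ≤ lam ∧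
        Matrix.vecMul t A = c ∧ c0 = t ⬝ᵥ b + lam := by
  constructor
  · intro H
    obtain ⟨x0, hx0⟩ := hne
    classical
    set g : Fin (m+1) → Row (n+1) :=
      Fin.cons ((Fin.cons 1 (-c) : Fin (n+1) → ℚ), (0:ℚ))
        (fun i => ((Fin.cons 0 (A i) : Fin (n+1) → ℚ), b i)) with hgdef
    set S0 : List (Row (n+1)) := List.ofFn g with hS0
    have hg0 : g 0 = ((Fin.cons 1 (-c) : Fin (n+1) → ℚ), (0:ℚ)) := rfl
    have hgi : ∀ i : Fin m, g i.succ = ((Fin.cons 0 (A i) : Fin (n+1) → ℚ), b i) := by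
      intro i; rw [hgdef, Fin.cons_succ]
    have hSol : ∀ v : Fin (n+1) → ℚ, Sol S0 v ↔
        (v 0 ≤ c ⬝ᵥ (Fin.tail v) ∧ A.mulVec (Fin.tail v) ≤ b) := by
      intro v
      constructor
      · intro hs
        constructor
        · have h0 := hs (g 0) ((List.mem_ofFn).2 ⟨0, rfl⟩)
          rw [hg0] at h0
          rw [cons_dotProduct_eq, neg_dotProduct] at h0
          have h0' : 1 * v 0 + -(c ⬝ᵥ Fin.tail v) ≤ (0:ℚ) := h0
          linarith
        · intro i
          have h1 := hs (g i.succ) ((List.mem_ofFn).2 ⟨i.succ, rfl⟩)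
          rw [hgi i] at h1
          rw [cons_dotProduct_eq] at h1
          have h1' : 0 * v 0 + A i ⬝ᵥ Fin.tail v ≤ b i := h1
          have : A.mulVec (Fin.tail v) i = A i ⬝ᵥ Fin.tail v := rfl
          rw [this]; linarith
      · rintro ⟨h1, h2⟩ r hr
        obtain ⟨i, rfl⟩ := (List.mem_ofFn).1 hr
        refine Fin.cases ?_ (fun i => ?_) i
        · rw [hg0, cons_dotProduct_eq, neg_dotProduct]; simp; linarith
        · rw [hgi i, cons_dotProduct_eq]
          show 0 * v 0 + A i ⬝ᵥ Fin.tail v ≤ b i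
          have : A.mulVec (Fin.tail v) i = A i ⬝ᵥ Fin.tail v := rfl
          have h3 := h2 i; rw [this] at h3; linarith
    obtain ⟨T, hcone, hequiv⟩ := elimAll n S0
    set z0 : ℚ := c ⬝ᵥ x0 with hz0def
    have hz0 : Sol T (fun _ => z0) := by
      refine (hequiv z0).2 ⟨Fin.cons z0 x0, Fin.cons_zero _ _, (hSol _).2 ⟨?_, ?_⟩⟩
      · rw [Fin.cons_zero, Fin.tail_cons]
      · rw [Fin.tail_cons]; exact hx0
    have hzle : ∀ z : ℚ, Sol T (fun _ => z) → z ≤ c0 := by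
      intro z hT
      obtain ⟨v, hv0, hv⟩ := (hequiv z).1 hT
      obtain ⟨h1, h2⟩ := (hSol v).1 hv
      have := H (Fin.tail v) h2
      linarith [hv0 ▸ h1]
    set U := T.filter (fun r => decide (0 < r.1 0)) with hUdef
    have hUne : U ≠ [] := by
      intro hnil
      have hTle : ∀ r ∈ T, r.1 0 ≤ 0 := by
        intro r hr
        by_contra hpos
        push_neg at hpos
        have : r ∈ U := List.mem_filter.2 ⟨hr, by simpa using hpos⟩
        simp [hnil] at this
      set Z := max z0 (c0+1) with hZ
      have hTZ : Sol T (fun _ => Z) := by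
        intro r hr
        have h1 := hz0 r hr
        rw [dot1] at h1 ⊢
        have h2 : r.1 0 * Z ≤ r.1 0 * z0 :=
          mul_le_mul_of_nonpos_left (le_max_left _ _) (hTle r hr)
        linarith
      have h3 := hzle Z hTZ
      have h4 : c0 + 1 ≤ Z := le_max_right _ _
      linarith
    cases hUarg : U.argmin (fun r => r.2 / r.1 0) with
    | none => exact absurd (List.argmin_eq_none.1 hUarg) hUne
    | some su =>
      have hsuU : su ∈ U := List.argmin_mem hUarg
      have hsuT : su ∈ T := List.mem_of_mem_filter hsuU
      have hsupos : 0 < su.1 0 := by simpa using (List.mem_filter.1 hsuU).2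
      set zstar : ℚ := su.2 / su.1 0 with hzstar
      have hz0le : z0 ≤ zstar := by
        have h1 := hz0 su hsuT
        rw [dot1] at h1
        rw [hzstar, le_div_iff₀ hsupos]
        linarith
      have hstar : Sol T (fun _ => zstar) := by
        intro r hr
        rw [dot1]
        rcases le_or_gt (r.1 0) 0 with hle | hpos
        · have h1 := hz0 r hr
          rw [dot1] at h1
          have h2 : r.1 0 * zstar ≤ r.1 0 * z0 := mul_le_mul_of_nonpos_left hz0le hle
          linarith
        · have hrU : r ∈ U := List.mem_filter.2 ⟨hr, by simpa using hpos⟩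
          have h2 : zstar ≤ r.2 / r.1 0 := List.le_of_mem_argmin hrU hUarg
          calc r.1 0 * zstar ≤ r.1 0 * (r.2 / r.1 0) :=
                mul_le_mul_of_nonneg_left h2 hpos.le
            _ = r.2 := by field_simp
      have hzsc0 : zstar ≤ c0 := hzle _ hstar
      -- extract weights
      have hS0ofFn : InCone (List.ofFn g) (padTo n su) := hS0 ▸ hcone su hsuT
      obtain ⟨t', htn, hlin', hrhs'⟩ := hS0ofFn.exists_weights_ofFn
      rw [Fin.sum_univ_succ] at hlin' hrhs'
      set μ : ℚ := t' 0 with hμdef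
      set y : Fin m → ℚ := fun i => t' i.succ with hydef
      have happ : ∀ w : Fin (n+1),
          μ * (g 0).1 w + ∑ i : Fin m, y i * (g i.succ).1 w = (padTo n su).1 w := by
        intro w
        have h := congrFun hlin' w
        simpa [Finset.sum_apply, smul_eq_mul] using h
      have hμ : μ = su.1 0 := by
        have h := happ 0
        have hz : ∀ i : Fin m, y i * (g i.succ).1 0 = 0 := by
          intro i; rw [hgi i]; simp
        rw [Finset.sum_congr rfl (fun i _ => hz i)] at h
        rw [hg0] at h
        simpa [padTo] using h
      have hμpos : 0 < μ := hμ ▸ hsupos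
      have hA : ∀ j : Fin n, (∑ i, y i * A i j) = μ * c j := by
        intro j
        have h := happ (Fin.succ j)
        have hz : ∀ i : Fin m, y i * (g i.succ).1 (Fin.succ j) = y i * A i j := by
          intro i; rw [hgi i]; simp
        rw [Finset.sum_congr rfl (fun i _ => hz i)] at h
        rw [hg0] at h
        have hpt : (padTo n su).1 (Fin.succ j) = 0 := by
          simp [padTo, Fin.val_succ]
        rw [hpt] at h
        simp only [Fin.cons_succ, Pi.neg_apply] at h
        linarith
      have hbb : ∑ i, y i * b i = su.2 := by
        have hz : ∀ i : Fin m, y i * (g i.succ).2 = y i * b i := by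
          intro i; rw [hgi i]
        rw [Finset.sum_congr rfl (fun i _ => hz i)] at hrhs'
        rw [hg0] at hrhs'
        simpa [padTo] using hrhs'
      set tF : Fin m → ℚ := fun i => y i / μ with htF
      have htFb : tF ⬝ᵥ b = zstar := by
        rw [hzstar, ← hμ, ← hbb]
        simp only [htF, dotProduct]
        rw [Finset.sum_div]
        exact Finset.sum_congr rfl fun i _ => by ring
      refine ⟨tF, c0 - tF ⬝ᵥ b, ?_, ?_, ?_, by ring⟩
      · intro i
        exact div_nonneg (htn _) hμpos.le
      · rw [htFb]; linarith
      · funext j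
        have hv : Matrix.vecMul tF A j = ∑ i, tF i * A i j := by
          simp [Matrix.vecMul, dotProduct]
        rw [hv]
        have : ∑ i, tF i * A i j = (∑ i, y i * A i j) / μ := by
          rw [Finset.sum_div]
          exact Finset.sum_congr rfl fun i _ => by rw [htF]; ring
        rw [this, hA j]
        field_simp
  · rintro ⟨t, lam, ht, hlam, hvA, hc0⟩ x hx
    have h1 : c ⬝ᵥ x = t ⬝ᵥ A.mulVec x := by
      rw [Matrix.dotProduct_mulVec, hvA]
    have h2 : t ⬝ᵥ A.mulVec x ≤ t ⬝ᵥ b := by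
      apply Finset.sum_le_sum
      intro i _
      exact mul_le_mul_of_nonneg_left (hx i) (ht i)
    rw [h1]
    calc t ⬝ᵥ A.mulVec x ≤ t ⬝ᵥ b := h2
      _ ≤ c0 := by rw [hc0]; linarith
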